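/- Let B, L ⊂ ℝ^ν be finite sets with #B = #L = N such that N^{-1/2}(e^{2πi b·l}) is unitary. Then for all t, s ∈ ℝ^ν, Σ_{l∈L} |χ_B(t + is − l)|² ≤ N^{-1} Σ_{b∈B} e^{4π‖b‖₂‖s‖₂}, where χ_B is extended to ℂ^ν by χ_B(z) = N^{-1} Σ_{b∈B} e^{2πi b·z}. -/

import Mathlib

open scoped Classical

/-- `χ_B` extended to `ℂ^ν`: `χ_B(z) = N^{-1} Σ_{b∈B} e^{2πi b·z}`. -/
noncomputable def chiBC {ν : ℕ} (B : Finset (EuclideanSpace ℝ (Fin ν)))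
    (z : Fin ν → ℂ) : ℂ :=
  (B.card : ℂ)⁻¹ * ∑ b ∈ B,
    Complex.exp (2 * (Real.pi : ℂ) * Complex.I * ∑ i, (b i : ℂ) * z i)

/-- If `N^{-1/2}(e^{2πi b·l})` is unitary, then for all `t, s ∈ ℝ^ν`,
`Σ_{l∈L} |χ_B(t + is − l)|² ≤ N^{-1} Σ_{b∈B} e^{4π‖b‖₂‖s‖₂}`. -/
theorem sum_chiB_sq_complex_bound {ν N : ℕ} (hN : 0 < N)
    (B L : Finset (EuclideanSpace ℝ (Fin ν)))
    (hB : B.card = N) (hL : L.card = N)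
    (hH : ∀ b ∈ B, ∀ b' ∈ B,
      ∑ l ∈ L,
          Complex.exp ((((2 : ℝ) * Real.pi * ∑ i, l i * (b' i - b i) : ℝ) : ℂ) * Complex.I)
        = if b = b' then (N : ℂ) else 0) :
    ∀ t s : EuclideanSpace ℝ (Fin ν),
      ∑ l ∈ L, ‖chiBC B (fun j => (t j : ℂ) + (s j : ℂ) * Complex.I - (l j : ℂ))‖ ^ 2
        ≤ (N : ℝ)⁻¹ * ∑ b ∈ B, Real.exp (4 * Real.pi * ‖b‖ * ‖s‖) := by
  intro t s
  have hπ := Real.pi_pos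
  set π := Real.pi with hπdef
  set a : EuclideanSpace ℝ (Fin ν) → ℝ := fun b => ∑ i, b i * s i with ha
  set c : EuclideanSpace ℝ (Fin ν) → EuclideanSpace ℝ (Fin ν) → ℝ :=
    fun b l => ∑ i, b i * (t i - l i) with hc
  set F : EuclideanSpace ℝ (Fin ν) → EuclideanSpace ℝ (Fin ν) → ℂ := fun b l =>
    Complex.exp (2 * (π : ℂ) * Complex.I *
      ∑ i, (b i : ℂ) * ((t i : ℂ) + (s i : ℂ) * Complex.I - (l i : ℂ))) with hFdef
  have hF : ∀ b l, F b l =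
      (Real.exp (-(2 * π * a b)) : ℂ) *
        Complex.exp (((2 * π * c b l : ℝ) : ℂ) * Complex.I) := by
    intro b l
    have hsum : (∑ i, (b i : ℂ) * ((t i : ℂ) + (s i : ℂ) * Complex.I - (l i : ℂ)))
        = ((c b l : ℝ) : ℂ) + ((a b : ℝ) : ℂ) * Complex.I := by
      simp only [ha, hc]
      push_cast
      rw [Finset.sum_mul, ← Finset.sum_add_distrib]
      exact Finset.sum_congr rfl fun i _ => by ring
    have harg : 2 * (π : ℂ) * Complex.I * (((c b l : ℝ) : ℂ) + ((a b : ℝ) : ℂ) * Complex.I)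
        = ((-(2 * π * a b) : ℝ) : ℂ) + ((2 * π * c b l : ℝ) : ℂ) * Complex.I := by
      push_cast
      linear_combination (2 * (π : ℂ) * (a b)) * Complex.I_mul_I
    rw [hFdef]
    simp only
    rw [hsum, harg, Complex.exp_add, Complex.ofReal_exp]
  have hconjF : ∀ b l, (starRingEnd ℂ) (F b l) =
      (Real.exp (-(2 * π * a b)) : ℂ) *
        Complex.exp (-(((2 * π * c b l : ℝ) : ℂ) * Complex.I)) := by
    intro b l
    rw [hF b l, map_mul, Complex.conj_ofReal, ← Complex.exp_conj, map_mul,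
      Complex.conj_ofReal, Complex.conj_I, mul_neg]
  have hkey : ∀ b ∈ B, ∀ b' ∈ B,
      ∑ l ∈ L, F b l * (starRingEnd ℂ) (F b' l)
        = if b = b' then (N : ℂ) * (Real.exp (-(4 * π * a b)) : ℂ) else 0 := by
    intro b hb b' hb'
    have step : ∀ l, F b l * (starRingEnd ℂ) (F b' l)
        = ((Real.exp (-(2 * π * a b)) : ℂ) * (Real.exp (-(2 * π * a b')) : ℂ)) *
            Complex.exp (((2 * π * ∑ i, (b i - b' i) * t i : ℝ) : ℂ) * Complex.I) *
            Complex.exp ((((2 : ℝ) * π * ∑ i, l i * (b' i - b i) : ℝ) : ℂ) * Complex.I) := by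
      intro l
      have hreal : 2 * π * c b l - 2 * π * c b' l
          = 2 * π * (∑ i, (b i - b' i) * t i) + 2 * π * (∑ i, l i * (b' i - b i)) := by
        simp only [hc, Finset.mul_sum, ← Finset.sum_sub_distrib, ← Finset.sum_add_distrib]
        exact Finset.sum_congr rfl fun i _ => by ring
      have hC := congrArg (fun x : ℝ => (x : ℂ)) hreal
      push_cast at hC
      have hexp : (((2 * π * c b l : ℝ) : ℂ)) * Complex.I + -((((2 * π * c b' l : ℝ) : ℂ)) * Complex.I)
          = ((2 * π * ∑ i, (b i - b' i) * t i : ℝ) : ℂ) * Complex.I +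
            (((2 : ℝ) * π * ∑ i, l i * (b' i - b i) : ℝ) : ℂ) * Complex.I := by
        push_cast
        linear_combination Complex.I * hC
      calc F b l * (starRingEnd ℂ) (F b' l)
          = ((Real.exp (-(2 * π * a b)) : ℂ) * (Real.exp (-(2 * π * a b')) : ℂ)) *
              (Complex.exp (((2 * π * c b l : ℝ) : ℂ) * Complex.I) *
               Complex.exp (-(((2 * π * c b' l : ℝ) : ℂ) * Complex.I))) := by
            rw [hF b l, hconjF b' l]; ring
        _ = _ := by rw [← Complex.exp_add, hexp, Complex.exp_add]; ring
    calc ∑ l ∈ L, F b l * (starRingEnd ℂ) (F b' l)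
        = ((Real.exp (-(2 * π * a b)) : ℂ) * (Real.exp (-(2 * π * a b')) : ℂ)) *
            Complex.exp (((2 * π * ∑ i, (b i - b' i) * t i : ℝ) : ℂ) * Complex.I) *
            ∑ l ∈ L, Complex.exp ((((2 : ℝ) * π * ∑ i, l i * (b' i - b i) : ℝ) : ℂ) * Complex.I) := by
          rw [Finset.mul_sum]; exact Finset.sum_congr rfl fun l _ => step l
      _ = _ := by
          rw [hH b hb b' hb']
          by_cases h : b = b'
          · subst h
            simp only [if_pos rfl]
            rw [show (∑ i, (b i - b i) * t i) = (0 : ℝ) by simp,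
              show (2 * π * (0 : ℝ)) = 0 by ring]
            simp only [Complex.ofReal_zero, zero_mul, Complex.exp_zero, mul_one]
            rw [← Complex.ofReal_mul, ← Real.exp_add,
              show -(2 * π * a b) + -(2 * π * a b) = -(4 * π * a b) by ring]
            simp [mul_comm]
          · simp [h]
  have hchi : ∀ l, ‖chiBC B (fun j => (t j : ℂ) + (s j : ℂ) * Complex.I - (l j : ℂ))‖ ^ 2
      = (N : ℝ)⁻¹ ^ 2 * ((∑ b ∈ B, F b l) * (starRingEnd ℂ) (∑ b ∈ B, F b l)).re := by
    intro l
    rw [chiBC]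
    rw [norm_mul, mul_pow, Complex.mul_conj]
    simp only [hB, norm_inv, Complex.norm_natCast, Complex.ofReal_re]
    rw [← Complex.sq_norm]
  have hNne : (N : ℝ) ≠ 0 := Nat.cast_ne_zero.mpr hN.ne'
  have hmain : ∑ l ∈ L, ‖chiBC B (fun j => (t j : ℂ) + (s j : ℂ) * Complex.I - (l j : ℂ))‖ ^ 2
      = (N : ℝ)⁻¹ * ∑ b ∈ B, Real.exp (-(4 * π * a b)) := by
    rw [Finset.sum_congr rfl fun l _ => hchi l, ← Finset.mul_sum]
    have hre : (∑ l ∈ L, ((∑ b ∈ B, F b l) * (starRingEnd ℂ) (∑ b ∈ B, F b l)))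
        = (((N : ℝ) * ∑ b ∈ B, Real.exp (-(4 * π * a b)) : ℝ) : ℂ) := by
      have expand : ∀ l, (∑ b ∈ B, F b l) * (starRingEnd ℂ) (∑ b ∈ B, F b l)
          = ∑ b ∈ B, ∑ b' ∈ B, F b l * (starRingEnd ℂ) (F b' l) := by
        intro l
        rw [map_sum, Finset.sum_mul_sum]
      rw [Finset.sum_congr rfl fun l _ => expand l, Finset.sum_comm]
      have hcol : ∀ b ∈ B, ∑ l ∈ L, ∑ b' ∈ B, F b l * (starRingEnd ℂ) (F b' l)
          = (N : ℂ) * (Real.exp (-(4 * π * a b)) : ℂ) := by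
        intro b hb
        rw [Finset.sum_comm, Finset.sum_congr rfl fun b' hb' => hkey b hb b' hb']
        simp [Finset.sum_ite_eq, hb]
      rw [Finset.sum_congr rfl hcol, ← Finset.mul_sum]
      push_cast
      ring
    rw [← Complex.re_sum, hre, Complex.ofReal_re]
    field_simp
  rw [hmain]
  apply mul_le_mul_of_nonneg_left _ (by positivity)
  apply Finset.sum_le_sum
  intro b _
  apply Real.exp_le_exp.mpr
  have hinner : |a b| ≤ ‖b‖ * ‖s‖ := by
    have h1 := abs_real_inner_le_norm b s
    have h2 : (inner ℝ b s : ℝ) = a b := by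
      simp [PiLp.inner_apply, RCLike.inner_apply, ha]
      exact Finset.sum_congr rfl fun i _ => mul_comm _ _
    rwa [h2] at h1
  nlinarith [neg_abs_le (a b), abs_nonneg (a b)]
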